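/- Let P ⊂ F² be finite, p, q ∈ P distinct, and suppose v⁽⁰⁾ ≤ v⁽¹⁾ ≤ ⋯ in ℤ_{≥0}^P is a sequence of vectors, coordinatewise nondecreasing and strictly increasing at the coordinate p, with v⁽ʳ⁺¹⁾ ≥ v⁽ʳ⁾ + e_p. Then Σ_{r≥0} b_p(v⁽ʳ⁾, n) − Σ_{r≥0} b_p(v⁽ʳ⁾, n−1) ≤ n+1, where b_p(v,n) = dim T(v,n) − dim T(v+e_p,n) and T(v,n) is the space of polynomials of degree ≤ n vanishing to order ≥ v_r at each r ∈ P. -/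
import Mathlib


open MvPolynomial
open Module

variable {F : Type*} [Field F]

/-- The subspace of polynomials in `F[x,y]` vanishing to order at least `m` at `p`:
all monomials of total degree `< m` in the Taylor expansion around `p` have zero
coefficient. -/
noncomputable def vanishingSubmodule (p : Fin 2 → F) (m : ℕ) :
    Submodule F (MvPolynomial (Fin 2) F) :=
  ⨅ (ω : Fin 2 →₀ ℕ) (_ : (ω.sum fun _ e => e) < m),
    LinearMap.ker ((lcoeff F ω).comp
      (aeval (fun i => X i + C (p i)) :
        MvPolynomial (Fin 2) F →ₐ[F] MvPolynomial (Fin 2) F).toLinearMap)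

/-- `T(v, n)`: the subspace of polynomials of degree at most `n` vanishing to order at
least `v p` at each point `p ∈ P`. -/
noncomputable def T (P : Finset (Fin 2 → F)) (v : (Fin 2 → F) → ℕ) (n : ℕ) :
    Submodule F (MvPolynomial (Fin 2) F) :=
  restrictTotalDegree (Fin 2) F n ⊓ ⨅ p ∈ P, vanishingSubmodule p (v p)

/-- `b_p(v, n) = dim T(v,n) − dim T(v + e_p, n)`. -/
noncomputable def b [DecidableEq (Fin 2 → F)] (P : Finset (Fin 2 → F)) (p : Fin 2 → F)
    (v : (Fin 2 → F) → ℕ) (n : ℕ) : ℕ :=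
  Module.finrank F (T P v n) - Module.finrank F (T P (Function.update v p (v p + 1)) n)


-- helper lemmas

lemma restrict_mono {m n : ℕ} (h : m ≤ n) :
    restrictTotalDegree (Fin 2) F m ≤ restrictTotalDegree (Fin 2) F n := by
  intro f hf
  rw [mem_restrictTotalDegree] at hf ⊢
  exact hf.trans h

lemma vanishing_antitone (p : Fin 2 → F) {m m' : ℕ} (h : m ≤ m') :
    vanishingSubmodule p m' ≤ vanishingSubmodule p m := by
  refine le_iInf fun ω => le_iInf fun hω => ?_
  exact iInf_le_of_le ω (iInf_le_of_le (lt_of_lt_of_le hω h) le_rfl)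

lemma T_le_T {P : Finset (Fin 2 → F)} {v w : (Fin 2 → F) → ℕ}
    (hvw : ∀ q ∈ P, v q ≤ w q) {m n : ℕ} (hmn : m ≤ n) : T P w m ≤ T P v n := by
  refine inf_le_inf (restrict_mono hmn) ?_
  refine le_iInf fun q => le_iInf fun hq => ?_
  exact le_trans (iInf_le_of_le q (iInf_le_of_le hq le_rfl)) (vanishing_antitone q (hvw q hq))

lemma T_inf {P : Finset (Fin 2 → F)} {v : (Fin 2 → F) → ℕ} {m n : ℕ} (h : m ≤ n) :
    T P v n ⊓ restrictTotalDegree (Fin 2) F m = T P v m := by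
  rw [T, T, inf_right_comm, inf_eq_right.mpr (restrict_mono h)]

instance T_fd (P : Finset (Fin 2 → F)) (v : (Fin 2 → F) → ℕ) (n : ℕ) :
    FiniteDimensional F (T P v n) :=
  Submodule.finiteDimensional_of_le (inf_le_left : T P v n ≤ _)

lemma quad {P : Finset (Fin 2 → F)} {v w : (Fin 2 → F) → ℕ}
    (hvw : ∀ q ∈ P, v q ≤ w q) {m n : ℕ} (hmn : m ≤ n) :
    finrank F (T P w n) + finrank F (T P v m) ≤
      finrank F (T P v n) + finrank F (T P w m) := by
  have h1 : T P w n ⊔ T P v m ≤ T P v n :=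
    sup_le (T_le_T hvw le_rfl) (T_le_T (fun q _ => le_rfl) hmn)
  have h2 : T P w n ⊓ T P v m ≤ T P w m := by
    rw [← T_inf (v := w) hmn]
    exact inf_le_inf le_rfl inf_le_left
  calc finrank F (T P w n) + finrank F (T P v m)
      = finrank F ↥(T P w n ⊔ T P v m) + finrank F ↥(T P w n ⊓ T P v m) :=
        (Submodule.finrank_sup_add_finrank_inf_eq _ _).symm
    _ ≤ finrank F (T P v n) + finrank F (T P w m) :=
        add_le_add (Submodule.finrank_mono h1) (Submodule.finrank_mono h2)

-- dimension step for restrictTotalDegree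

lemma exists_eq_of_degree_eq {ω : Fin 2 →₀ ℕ} {m : ℕ} (h : (ω.sum fun _ e => e) = m) :
    ω = Finsupp.single 0 (ω 0) + Finsupp.single 1 (m - ω 0) := by
  have hsum : ω 0 + ω 1 = m := by
    rw [← h, Finsupp.sum_fintype _ _ (fun _ => rfl), Fin.sum_univ_two]
  ext i
  fin_cases i <;> simp [Finsupp.single_apply, Fin.ext_iff] <;> omega

lemma finrank_restrict_step (m : ℕ) :
    finrank F (restrictTotalDegree (Fin 2) F (m + 1)) ≤
      finrank F (restrictTotalDegree (Fin 2) F m) + (m + 2) := by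
  classical
  set R := restrictTotalDegree (Fin 2) F (m + 1)
  let φ : R →ₗ[F] (Fin (m + 2) → F) :=
    { toFun := fun f i => coeff (Finsupp.single 0 (i : ℕ) + Finsupp.single 1 (m + 1 - i)) f.1
      map_add' := by intro x y; funext i; simp
      map_smul' := by intro c x; funext i; simp }
  have hker : LinearMap.ker φ ≤
      (restrictTotalDegree (Fin 2) F m).comap R.subtype := by
    intro f hf
    simp only [LinearMap.mem_ker] at hf
    simp only [Submodule.mem_comap, Submodule.coe_subtype, mem_restrictTotalDegree]
    rw [totalDegree]
    refine Finset.sup_le fun ω hω => ?_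
    have hle : (ω.sum fun _ e => e) ≤ m + 1 :=
      le_trans (le_totalDegree hω) ((mem_restrictTotalDegree _ _ _).mp f.2)
    rcases lt_or_eq_of_le hle with hlt | heq
    · omega
    · exfalso
      have hω0 : ω 0 ≤ m + 1 := by
        have : ω 0 + ω 1 = m + 1 := by
          rw [← heq, Finsupp.sum_fintype _ _ (fun _ => rfl), Fin.sum_univ_two]
        omega
      have h2 := congrFun hf ⟨ω 0, by omega⟩
      have h3 : coeff (Finsupp.single 0 (ω 0) + Finsupp.single 1 (m + 1 - ω 0))
          (f : MvPolynomial (Fin 2) F) = 0 := h2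
      rw [← exists_eq_of_degree_eq heq] at h3
      exact (MvPolynomial.mem_support_iff.mp hω) h3
  have := LinearMap.finrank_range_add_finrank_ker φ
  have hr : finrank F (LinearMap.range φ) ≤ m + 2 := by
    have := Submodule.finrank_le (LinearMap.range φ)
    simpa using this
  have hk : finrank F (LinearMap.ker φ) ≤ finrank F (restrictTotalDegree (Fin 2) F m) := by
    refine le_trans (Submodule.finrank_mono hker) ?_
    exact le_of_eq (LinearEquiv.finrank_eq
      (Submodule.comapSubtypeEquivOfLe (restrict_mono (Nat.le_succ m))))
  omega


lemma finrank_T_step (P : Finset (Fin 2 → F)) (v : (Fin 2 → F) → ℕ) (m : ℕ) :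
    finrank F (T P v (m + 1)) ≤ finrank F (T P v m) + (m + 2) := by
  have h1 : T P v (m + 1) ⊔ restrictTotalDegree (Fin 2) F m ≤
      restrictTotalDegree (Fin 2) F (m + 1) :=
    sup_le inf_le_left (restrict_mono (Nat.le_succ m))
  have h2 : T P v (m + 1) ⊓ restrictTotalDegree (Fin 2) F m = T P v m :=
    T_inf (Nat.le_succ m)
  have key := Submodule.finrank_sup_add_finrank_inf_eq (T P v (m + 1))
    (restrictTotalDegree (Fin 2) F m)
  have h3 := Submodule.finrank_mono h1
  have h4 := finrank_restrict_step (F := F) m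
  rw [h2] at key
  omega

lemma totalDegree_shift_le (p : Fin 2 → F) (f : MvPolynomial (Fin 2) F) :
    (aeval (fun i => X i + C (p i)) f : MvPolynomial (Fin 2) F).totalDegree ≤
      f.totalDegree := by
  conv_lhs => rw [f.as_sum]
  rw [map_sum]
  refine totalDegree_finsetSum_le fun ω hω => ?_
  rw [aeval_monomial]
  refine le_trans (totalDegree_mul _ _) ?_
  have h1 : (algebraMap F (MvPolynomial (Fin 2) F) (coeff ω f)).totalDegree = 0 :=
    totalDegree_C _
  rw [h1, zero_add]
  refine le_trans ?_ (le_totalDegree hω)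
  rw [Finsupp.prod]
  refine le_trans (totalDegree_finset_prod _ _) ?_
  rw [Finsupp.sum]
  refine Finset.sum_le_sum fun i _ => ?_
  refine le_trans (totalDegree_pow _ _) ?_
  have hX : (X i + C (p i) : MvPolynomial (Fin 2) F).totalDegree ≤ 1 :=
    le_trans (totalDegree_add _ _) (by simp [totalDegree_X, totalDegree_C])
  calc ω i * (X i + C (p i) : MvPolynomial (Fin 2) F).totalDegree
      ≤ ω i * 1 := Nat.mul_le_mul_left _ hX
    _ = ω i := mul_one _

lemma T_eq_bot {P : Finset (Fin 2 → F)} {v : (Fin 2 → F) → ℕ} {p : Fin 2 → F}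
    (hp : p ∈ P) {n : ℕ} (h : n < v p) : T P v n = ⊥ := by
  rw [eq_bot_iff]
  intro f hf
  obtain ⟨hd, hv⟩ := Submodule.mem_inf.mp hf
  rw [mem_restrictTotalDegree] at hd
  have hvp : f ∈ vanishingSubmodule p (v p) :=
    (Submodule.mem_iInf _).mp ((Submodule.mem_iInf _).mp hv p) hp
  have hcoeff : ∀ ω : Fin 2 →₀ ℕ, (ω.sum fun _ e => e) < v p →
      coeff ω (aeval (fun i => X i + C (p i)) f : MvPolynomial (Fin 2) F) = 0 := by
    intro ω hω
    have := (Submodule.mem_iInf _).mp ((Submodule.mem_iInf _).mp hvp ω) hω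
    simpa using this
  have hg : (aeval (fun i => X i + C (p i)) f : MvPolynomial (Fin 2) F) = 0 := by
    apply MvPolynomial.ext
    intro ω
    rw [coeff_zero]
    by_cases hω : (ω.sum fun _ e => e) < v p
    · exact hcoeff ω hω
    · refine coeff_eq_zero_of_totalDegree_lt ?_
      refine lt_of_le_of_lt (le_trans (totalDegree_shift_le p f) hd) ?_
      rw [Finsupp.sum] at hω
      omega
  have hback : (aeval (fun i => X i - C (p i)) :
        MvPolynomial (Fin 2) F →ₐ[F] MvPolynomial (Fin 2) F).comp
        (aeval (fun i => X i + C (p i))) = AlgHom.id F (MvPolynomial (Fin 2) F) := by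
    apply MvPolynomial.algHom_ext
    intro i
    simp
  have hf0 : f = 0 := by
    have h2 := congrArg (aeval (fun i => X i - C (p i)) :
      MvPolynomial (Fin 2) F →ₐ[F] MvPolynomial (Fin 2) F) hg
    rw [← AlgHom.comp_apply, hback] at h2
    simpa using h2
  simp [hf0]


/-- Let `v⁽⁰⁾ ≤ v⁽¹⁾ ≤ ⋯` be coordinatewise nondecreasing with `v⁽ʳ⁺¹⁾ ≥ v⁽ʳ⁾ + e_p`.
Then `Σ_{r≥0} b_p(v⁽ʳ⁾, n) − Σ_{r≥0} b_p(v⁽ʳ⁾, n−1) ≤ n + 1`. -/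
theorem sum_b_sub_sum_b_le [DecidableEq (Fin 2 → F)]
    (P : Finset (Fin 2 → F)) (p : Fin 2 → F) (hp : p ∈ P) (n : ℕ) (hn : 1 ≤ n)
    (v : ℕ → (Fin 2 → F) → ℕ)
    (hmono : ∀ r : ℕ, ∀ q ∈ P, v r q ≤ v (r + 1) q)
    (hstrict : ∀ r : ℕ, v r p + 1 ≤ v (r + 1) p) :
    ∑ᶠ r : ℕ, b P p (v r) n ≤ (∑ᶠ r : ℕ, b P p (v r) (n - 1)) + (n + 1) := by
  set u : ℕ → (Fin 2 → F) → ℕ := fun r => Function.update (v r) p (v r p + 1) with hu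
  have hurp : ∀ r, u r p = v r p + 1 := fun r => Function.update_self _ _ _
  have hvu : ∀ r q, v r q ≤ u r q := by
    intro r q
    rcases eq_or_ne q p with rfl | hq
    · rw [hurp]; omega
    · rw [hu]; simp [Function.update_of_ne hq]
  have hup : ∀ r, ∀ q ∈ P, u r q ≤ v (r + 1) q := by
    intro r q hq
    rcases eq_or_ne q p with rfl | hqp
    · rw [hurp]; exact hstrict r
    · rw [hu]; simpa [Function.update_of_ne hqp] using hmono r q hq
  have hgrow : ∀ r, r ≤ v r p := by
    intro r
    induction r with
    | zero => exact Nat.zero_le _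
    | succ r ih => have := hstrict r; omega
  have hsupp : ∀ m, m ≤ n → ∀ r, n + 1 ≤ r → b P p (v r) m = 0 := by
    intro m hm r hr
    have hvr : n + 1 ≤ v r p := le_trans hr (hgrow r)
    have h1 : T P (v r) m = ⊥ := T_eq_bot hp (by omega)
    have h2 : T P (Function.update (v r) p (v r p + 1)) m = ⊥ := by
      have : T P (u r) m = ⊥ := T_eq_bot hp (by rw [hurp]; omega)
      exact this
    rw [b, h1, h2, finrank_bot]
  have hb_cast : ∀ r m, (b P p (v r) m : ℤ) =
      (finrank F (T P (v r) m) : ℤ) - finrank F (T P (u r) m) := by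
    intro r m
    have hle : finrank F (T P (u r) m) ≤ finrank F (T P (v r) m) :=
      Submodule.finrank_mono (T_le_T (fun q _ => hvu r q) le_rfl)
    have hbd : b P p (v r) m = finrank F (T P (v r) m) - finrank F (T P (u r) m) := rfl
    rw [hbd, Nat.cast_sub hle]
  have hsum1 : ∑ᶠ r : ℕ, b P p (v r) n = ∑ r ∈ Finset.range (n + 1), b P p (v r) n := by
    apply finsum_eq_finset_sum_of_support_subset
    intro r hr
    simp only [Function.mem_support] at hr
    simp only [Finset.coe_range, Set.mem_Iio]
    by_contra hcon
    exact hr (hsupp n le_rfl r (by omega))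
  have hsum2 : ∑ᶠ r : ℕ, b P p (v r) (n - 1) =
      ∑ r ∈ Finset.range (n + 1), b P p (v r) (n - 1) := by
    apply finsum_eq_finset_sum_of_support_subset
    intro r hr
    simp only [Function.mem_support] at hr
    simp only [Finset.coe_range, Set.mem_Iio]
    by_contra hcon
    exact hr (hsupp (n - 1) (by omega) r (by omega))
  rw [hsum1, hsum2, ← Nat.cast_le (α := ℤ)]
  push_cast
  rw [Finset.sum_congr rfl (fun r _ => hb_cast r n),
    Finset.sum_congr rfl (fun r _ => hb_cast r (n - 1))]
  have key : ∀ N : ℕ, ∑ r ∈ Finset.range (N + 1),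
      (((finrank F (T P (v r) n) : ℤ) - finrank F (T P (v r) (n - 1))) -
        ((finrank F (T P (u r) n) : ℤ) - finrank F (T P (u r) (n - 1)))) ≤
      (n + 1 : ℤ) - ((finrank F (T P (u N) n) : ℤ) - finrank F (T P (u N) (n - 1))) := by
    intro N
    induction N with
    | zero =>
      rw [Finset.sum_range_one]
      have h0 : finrank F (T P (v 0) n) ≤ finrank F (T P (v 0) (n - 1)) + (n + 1) := by
        have hstep := finrank_T_step P (v 0) (n - 1)
        have hn1 : n - 1 + 1 = n := by omega
        rw [hn1] at hstep
        omega
      have h0z : (finrank F (T P (v 0) n) : ℤ) ≤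
          (finrank F (T P (v 0) (n - 1)) : ℤ) + (n + 1) := by exact_mod_cast h0
      linarith
    | succ N ih =>
      rw [Finset.sum_range_succ]
      have hq : finrank F (T P (v (N + 1)) n) + finrank F (T P (u N) (n - 1)) ≤
          finrank F (T P (u N) n) + finrank F (T P (v (N + 1)) (n - 1)) :=
        quad (hup N) (by omega)
      have hqz : (finrank F (T P (v (N + 1)) n) : ℤ) + finrank F (T P (u N) (n - 1)) ≤
          (finrank F (T P (u N) n) : ℤ) + finrank F (T P (v (N + 1)) (n - 1)) := by
        exact_mod_cast hq
      linarith
  have hpos : finrank F (T P (u n) (n - 1)) ≤ finrank F (T P (u n) n) :=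
    Submodule.finrank_mono (T_le_T (fun q _ => le_rfl) (by omega))
  have hposz : (finrank F (T P (u n) (n - 1)) : ℤ) ≤ finrank F (T P (u n) n) := by
    exact_mod_cast hpos
  have hkey := key n
  have h5 : ∑ r ∈ Finset.range (n + 1),
        ((finrank F (T P (v r) n) : ℤ) - finrank F (T P (u r) n)) -
      ∑ r ∈ Finset.range (n + 1),
        ((finrank F (T P (v r) (n - 1)) : ℤ) - finrank F (T P (u r) (n - 1))) =
      ∑ r ∈ Finset.range (n + 1),
        (((finrank F (T P (v r) n) : ℤ) - finrank F (T P (v r) (n - 1))) -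
          ((finrank F (T P (u r) n) : ℤ) - finrank F (T P (u r) (n - 1)))) := by
    rw [← Finset.sum_sub_distrib]
    exact Finset.sum_congr rfl fun r _ => by ring
  linarith
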